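/- arXiv:2603.25134 — 3 statements merged into one kernel-verified Lean document; each statement's English description precedes it below -/
import Mathlib

section
/- Let h ≥ 1 and let A = (a_{ij}) be an h × h matrix with nonnegative integer entries such that all column sums of A are equal and at least 2, i.e., ∑_{i=1}^h a_{i1} = ∑_{i=1}^h a_{i2} = ⋯ = ∑_{i=1}^h a_{ih} = c ≥ 2. Then there exist positive integers m ≠ n and nonnegative integers p₁,…,p_m, q₁,…,q_n such that (1,1,…,1)(A^{p₁} + ⋯ + A^{p_m}) = (1,1,…,1)(A^{q₁} + ⋯ + A^{q_n}), where (1,1,…,1) is the all-ones row vector of length h. (By the main theorem of the paper, for a finite graph E without sinks with adjacency matrix A = A_E, this condition is equivalent to the Leavitt path algebra L_K(E) failing to have graded Invariant Basis Number.) -/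
/-- If all column sums of the `h × h` matrix `A` over `ℕ` equal a common value
`c ≥ 2`, then there exist positive integers `m ≠ n` and nonnegative integers
`p₁,…,p_m, q₁,…,q_n` with
`(1,…,1)(A^{p₁} + ⋯ + A^{p_m}) = (1,…,1)(A^{q₁} + ⋯ + A^{q_n})`. -/
theorem exists_onesRow_powSum_eq_of_colSum {h : ℕ} (hh : 1 ≤ h)
    (A : Matrix (Fin h) (Fin h) ℕ) (c : ℕ) (hc : 2 ≤ c)
    (hcol : ∀ j : Fin h, ∑ i : Fin h, A i j = c) :
    ∃ m n : ℕ, 0 < m ∧ 0 < n ∧ m ≠ n ∧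
      ∃ (p : Fin m → ℕ) (q : Fin n → ℕ),
        Matrix.vecMul (fun _ => 1) (∑ j : Fin m, A ^ p j) =
          Matrix.vecMul (fun _ => 1) (∑ l : Fin n, A ^ q l) := by
  refine ⟨1, c, one_pos, by omega, by omega, fun _ => 1, fun _ => 0, ?_⟩
  funext j
  simp [Matrix.vecMul, dotProduct, Matrix.one_apply, Finset.sum_apply,
    Finset.sum_ite_eq, hcol j]
end

section
/- Let G be a finite group and let S be a subset of G with |S| ≥ 2. Define the adjacency matrix A of the Cayley graph E_{G,S}, indexed by G × G, by A_{g,h} = 1 if g⁻¹h ∈ S and A_{g,h} = 0 otherwise. Then there exist positive integers m ≠ n and nonnegative integers p₁,…,p_m, q₁,…,q_n such that (1,1,…,1)(A^{p₁} + ⋯ + A^{p_m}) = (1,1,…,1)(A^{q₁} + ⋯ + A^{q_n}), where (1,1,…,1) is the all-ones row vector indexed by G. (This is the combinatorial core of the implication that if |S| ≥ 2 then the Leavitt path algebra of the Cayley graph E_{G,S} fails to have graded Invariant Basis Number.) -/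
/-- Let `G` be a finite group and `S ⊆ G` with `|S| ≥ 2`, and let `A` be the
adjacency matrix of the Cayley graph `E_{G,S}` (so `A g h = 1` if `g⁻¹h ∈ S`
and `0` otherwise). Then there exist positive integers `m ≠ n` and nonnegative
integers `p₁,…,p_m, q₁,…,q_n` with
`(1,…,1)(A^{p₁} + ⋯ + A^{p_m}) = (1,…,1)(A^{q₁} + ⋯ + A^{q_n})`. -/
theorem cayley_exists_onesRow_powSum_eq {G : Type*} [Group G] [Fintype G]
    [DecidableEq G] (S : Finset G) (hS : 2 ≤ S.card) (A : Matrix G G ℕ)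
    (hA : ∀ g h : G, A g h = if g⁻¹ * h ∈ S then 1 else 0) :
    ∃ m n : ℕ, 0 < m ∧ 0 < n ∧ m ≠ n ∧
      ∃ (p : Fin m → ℕ) (q : Fin n → ℕ),
        Matrix.vecMul (fun _ => 1) (∑ j : Fin m, A ^ p j) =
          Matrix.vecMul (fun _ => 1) (∑ l : Fin n, A ^ q l) := by
  refine ⟨1, S.card, one_pos, by omega, by omega, fun _ => 1, fun _ => 0, ?_⟩
  funext h
  have hcol : ∀ h : G, ∑ g : G, A g h = S.card := by
    intro h
    calc ∑ g : G, A g h = ∑ g : G, (if g⁻¹ * h ∈ S then 1 else 0) := by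
          simp [hA]
      _ = ∑ g : G, (if g ∈ S then 1 else 0) := by
          exact Fintype.sum_equiv ⟨fun g => g⁻¹ * h, fun g => h * g⁻¹,
            fun g => by group, fun g => by group⟩ _ _ (fun g => rfl)
      _ = S.card := by simp
  simp only [Matrix.vecMul, dotProduct, Finset.sum_apply, pow_zero,
    pow_one, Finset.sum_const, Finset.card_univ, Fintype.card_fin]
  simp [Matrix.one_apply, Finset.mul_sum, hcol, mul_comm]
end

section
/- Let G be a finite group, 𝒞 the set of conjugacy classes of G, and 𝔯 : 𝒞 → ℕ a ramification data with ∑_{C ∈ 𝒞} 𝔯(C)·|C| ≥ 2. Let A be the adjacency matrix of the Hopf graph Γ_{G,𝔯}, indexed by G × G, given by A_{x,y} = 𝔯([x⁻¹y]). Then there exist positive integers m ≠ n and nonnegative integers p₁,…,p_m, q₁,…,q_n such that (1,1,…,1)(A^{p₁} + ⋯ + A^{p_m}) = (1,1,…,1)(A^{q₁} + ⋯ + A^{q_n}), where (1,1,…,1) is the all-ones row vector indexed by G. (This is the combinatorial core of the implication that if ∑_{C} 𝔯(C)·|C| ≥ 2 then the Leavitt path algebra of the Hopf graph Γ_{G,𝔯}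 fails to have graded Invariant Basis Number.) -/
/-- Let `G` be a finite group with ramification data `𝔯 : ConjClasses G → ℕ`
satisfying `∑_{C} 𝔯(C) * |C| ≥ 2`, and let `A` be the adjacency matrix of the
Hopf graph `Γ_{G,𝔯}`, given by `A x y = 𝔯 [x⁻¹y]`. Then there exist positive
integers `m ≠ n` and nonnegative integers `p₁,…,p_m, q₁,…,q_n` with
`(1,…,1)(A^{p₁} + ⋯ + A^{p_m}) = (1,…,1)(A^{q₁} + ⋯ + A^{q_n})`. -/
theorem hopf_exists_onesRow_powSum_eq {G : Type*} [Group G] [Fintype G]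
    [DecidableEq G] [Fintype (ConjClasses G)] (𝔯 : ConjClasses G → ℕ)
    (h𝔯 : 2 ≤ ∑ C : ConjClasses G, 𝔯 C * C.carrier.ncard)
    (A : Matrix G G ℕ)
    (hA : ∀ x y : G, A x y = 𝔯 (ConjClasses.mk (x⁻¹ * y))) :
    ∃ m n : ℕ, 0 < m ∧ 0 < n ∧ m ≠ n ∧
      ∃ (p : Fin m → ℕ) (q : Fin n → ℕ),
        Matrix.vecMul (fun _ => 1) (∑ j : Fin m, A ^ p j) =
          Matrix.vecMul (fun _ => 1) (∑ l : Fin n, A ^ q l) := by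
  classical
  set d : ℕ := ∑ C : ConjClasses G, 𝔯 C * C.carrier.ncard with hd
  -- every column sum of A is d
  have hcol : ∀ y : G, (∑ x : G, A x y) = d := by
    intro y
    have h1 : (∑ x : G, A x y) = ∑ z : G, 𝔯 (ConjClasses.mk z) := by
      rw [← Equiv.sum_comp (Equiv.trans (Equiv.inv G) (Equiv.mulRight y))
        (fun z => 𝔯 (ConjClasses.mk z))]
      simp [hA]
    rw [h1, hd]
    rw [← Finset.sum_fiberwise Finset.univ (fun z => ConjClasses.mk z)
      (fun z => 𝔯 (ConjClasses.mk z))]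
    refine Finset.sum_congr rfl fun C _ => ?_
    have hcard : C.carrier.ncard =
        (Finset.univ.filter (fun z : G => ConjClasses.mk z = C)).card := by
      rw [Set.ncard_eq_toFinset_card']
      congr 1
      ext z
      simp [ConjClasses.mem_carrier_iff_mk_eq]
    rw [hcard, Finset.sum_congr rfl (fun z hz => by
      rw [(Finset.mem_filter.mp hz).2]), Finset.sum_const, smul_eq_mul, mul_comm]
  -- ones is a left eigenvector
  have hones : Matrix.vecMul (fun _ => (1 : ℕ)) A = fun _ => d := by
    funext y
    simp [Matrix.vecMul, dotProduct, hcol y]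
  have hpow : ∀ k : ℕ, Matrix.vecMul (fun _ => (1 : ℕ)) (A ^ k) = fun _ => d ^ k := by
    intro k
    induction k with
    | zero => simp [Matrix.vecMul_one]
    | succ k ih =>
      rw [pow_succ, ← Matrix.vecMul_vecMul, ih]
      funext y
      simp only [Matrix.vecMul, dotProduct]
      rw [← Finset.mul_sum, hcol y, pow_succ]
  refine ⟨1, d, one_pos, by omega, by omega, fun _ => 1, fun _ => 0, ?_⟩
  have h1 : (∑ j : Fin 1, A ^ (1 : ℕ)) = A ^ (1 : ℕ) := by simp
  have h2 : (∑ l : Fin d, A ^ ((fun _ => 0) l : ℕ)) = (d : ℕ) • (1 : Matrix G G ℕ) := by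
    simp
  rw [h1, hpow 1, h2]
  funext y
  simp [Matrix.vecMul, dotProduct, Matrix.one_apply]
end
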